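/- arXiv:1312.3194 — 4 statements merged into one kernel-verified Lean document; each statement's English description precedes it below -/
import Mathlib

section
/- Let K be a finite field with q^m elements, let g_1, …, g_N ∈ K be linearly independent over F_q (so m ≥ N), let 1 ≤ M ≤ N, and let f be a nonzero linearized polynomial over K of q-degree at most M − 1. Then rank_{F_q}((f(g_1), …, f(g_N))) ≥ N − M + 1. Consequently, the Gabidulin code {(f(g_1), …, f(g_N)) : f a linearized polynomial of q-degree at most M − 1} has minimum rank distance at least N − M + 1. -/
/-- The subfield `F_q = {a ∈ K : a ^ q = a}` of a field `K` of characteristic `p`,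
where `q = p ^ e`. -/
def Fqsub (p e : ℕ) (K : Type*) [Field K] [Fact p.Prime] [CharP K p] : Subfield K where
  carrier := {x : K | x ^ p ^ e = x}
  mul_mem' := by
    intro a b ha hb
    simp only [Set.mem_setOf_eq] at *
    rw [mul_pow, ha, hb]
  one_mem' := by simp
  add_mem' := by
    intro a b ha hb
    haveI : ExpChar K p := ExpChar.prime Fact.out
    simp only [Set.mem_setOf_eq] at *
    rw [add_pow_expChar_pow, ha, hb]
  zero_mem' := by
    simp only [Set.mem_setOf_eq]
    exact zero_pow (pow_ne_zero _ (Nat.Prime.ne_zero Fact.out))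
  neg_mem' := by
    intro a ha
    haveI : ExpChar K p := ExpChar.prime Fact.out
    simp only [Set.mem_setOf_eq] at *
    calc (-a) ^ p ^ e = (0 - a) ^ p ^ e := by rw [zero_sub]
    _ = 0 ^ p ^ e - a ^ p ^ e := sub_pow_expChar_pow 0 a e
    _ = -a := by
        rw [ha, zero_pow (pow_ne_zero _ (Nat.Prime.ne_zero (Fact.out : p.Prime))), zero_sub]
  inv_mem' := by
    intro x hx
    simp only [Set.mem_setOf_eq] at *
    rw [inv_pow, hx]

/-- The rank over `F_q` of a vector `v ∈ K^N`: the dimension over `F_q` of the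
`F_q`-linear span of its coordinates. -/
noncomputable def rankFq (p e : ℕ) (K : Type*) [Field K] [Fact p.Prime] [CharP K p]
    {N : ℕ} (v : Fin N → K) : ℕ :=
  Module.finrank (Fqsub p e K) (Submodule.span (Fqsub p e K) (Set.range v))

open Polynomial

section Aux

variable (p e : ℕ) [Fact p.Prime] {K : Type*} [Field K] [CharP K p]

lemma Fq_pow_fix {c : K} (hc : c ^ p ^ e = c) (j : ℕ) : c ^ (p ^ e) ^ j = c := by
  induction j with
  | zero => simp
  | succ j ih => rw [pow_succ, pow_mul, ih, hc]

/-- The linearized polynomial as an `F_q`-linear map. -/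
noncomputable def linMap {M : ℕ} (a : Fin M → K) : K →ₗ[Fqsub p e K] K where
  toFun x := ∑ j, a j * x ^ (p ^ e) ^ (j : ℕ)
  map_add' x y := by
    haveI : ExpChar K p := ExpChar.prime Fact.out
    rw [← Finset.sum_add_distrib]
    refine Finset.sum_congr rfl fun j _ => ?_
    have key : (x + y) ^ (p ^ e) ^ (j : ℕ) = x ^ (p ^ e) ^ (j : ℕ) + y ^ (p ^ e) ^ (j : ℕ) := by
      rw [← pow_mul]
      exact add_pow_expChar_pow x y p (e * j)
    rw [key, mul_add]
  map_smul' c x := by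
    have hsm : ∀ y : K, c • y = (c : K) * y := fun y => rfl
    simp only [RingHom.id_apply, hsm]
    rw [Finset.mul_sum]
    refine Finset.sum_congr rfl fun j _ => ?_
    rw [mul_pow, Fq_pow_fix p e c.2 j]; ring

lemma linMap_apply {M : ℕ} (a : Fin M → K) (x : K) :
    linMap p e a x = ∑ j, a j * x ^ (p ^ e) ^ (j : ℕ) := rfl

lemma dvd_X_pow_pow (m : ℕ) :
    ((X : K[X]) ^ p ^ e - X) ∣ (X : K[X]) ^ (p ^ e) ^ m - X := by
  haveI : ExpChar K[X] p := ExpChar.prime Fact.out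
  induction m with
  | zero => simp
  | succ m ih =>
      have e1 : ((X : K[X]) ^ (p ^ e) ^ m - X) ^ p ^ e
          = X ^ (p ^ e) ^ (m + 1) - X ^ p ^ e := by
        rw [sub_pow_expChar_pow, ← pow_mul, ← pow_succ]
      have key : (X : K[X]) ^ (p ^ e) ^ (m + 1) - X
          = ((X : K[X]) ^ (p ^ e) ^ m - X) ^ p ^ e + (X ^ p ^ e - X) := by
        rw [e1]; ring
      rw [key]
      exact dvd_add (ih.pow (pow_ne_zero _ (Fact.out : p.Prime).ne_zero)) dvd_rfl

lemma natCard_eq_pow_finrank (F V : Type*) [Field F] [Finite F] [AddCommGroup V]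
    [Module F V] [Finite V] : Nat.card V = Nat.card F ^ Module.finrank F V := by
  haveI := Fintype.ofFinite F
  haveI := Fintype.ofFinite V
  simp only [Nat.card_eq_fintype_card]
  exact Module.card_eq_pow_finrank

end Aux

lemma card_Fqsub_ge (p e m : ℕ) [Fact p.Prime] (he : 1 ≤ e) (K : Type*) [Field K] [Fintype K]
    [CharP K p] (hcard : Fintype.card K = (p ^ e) ^ m) :
    p ^ e ≤ Nat.card (Fqsub p e K) := by
  classical
  have hp2 : 2 ≤ p := (Fact.out : p.Prime).two_le
  have h1q : 1 < p ^ e := Nat.one_lt_pow (by omega) hp2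
  set Q : K[X] := X ^ p ^ e - X with hQ
  have hne : ((X : K[X]) ^ Fintype.card K - X) ≠ 0 :=
    FiniteField.X_pow_card_sub_X_ne_zero K Fintype.one_lt_card
  have hsplitbig : Splits ((X : K[X]) ^ Fintype.card K - X) := by
    rw [splits_iff_card_roots, FiniteField.roots_X_pow_card_sub_X,
      FiniteField.X_pow_card_sub_X_natDegree_eq K Fintype.one_lt_card]
    simp
  have hdvd : Q ∣ (X : K[X]) ^ Fintype.card K - X := by
    rw [hcard]; exact dvd_X_pow_pow p e m
  have hQsplit : Splits Q := hsplitbig.of_dvd hne hdvd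
  have hsep : Q.Separable := by
    have hder : derivative Q = -1 := by
      rw [hQ, derivative_sub, derivative_X_pow, derivative_X]
      have h0 : ((p ^ e : ℕ) : K) = 0 :=
        (CharP.cast_eq_zero_iff K p (p ^ e)).mpr (dvd_pow_self p (by omega))
      simp [h0]
    rw [Polynomial.Separable, hder]
    exact (isCoprime_one_right).neg_right
  have hcardroots : Multiset.card Q.roots = p ^ e := by
    rw [splits_iff_card_roots.mp hQsplit, hQ,
      FiniteField.X_pow_card_sub_X_natDegree_eq K h1q]
  have hnodup := nodup_roots hsep
  set T : Finset K := Q.roots.toFinset with hT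
  have hTcard : T.card = p ^ e := by
    rw [hT, Multiset.toFinset_card_of_nodup hnodup, hcardroots]
  have hsub : ∀ x ∈ T, x ∈ Fqsub p e K := by
    intro x hx
    have hroot := isRoot_of_mem_roots (Multiset.mem_toFinset.mp hx)
    have : x ^ p ^ e - x = 0 := by simpa [hQ] using hroot
    exact sub_eq_zero.mp this
  haveI : Fintype (Fqsub p e K) := Fintype.ofFinite _
  have hinj : Function.Injective
      (fun x : {y // y ∈ T} => (⟨x.1, hsub x.1 x.2⟩ : Fqsub p e K)) := by
    intro x y hxy
    exact Subtype.ext (congrArg (fun z : Fqsub p e K => (z : K)) hxy)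
  calc p ^ e = T.card := hTcard.symm
    _ = Fintype.card {y // y ∈ T} := (Fintype.card_coe T).symm
    _ ≤ Fintype.card (Fqsub p e K) := Fintype.card_le_of_injective _ hinj
    _ = Nat.card (Fqsub p e K) := (Nat.card_eq_fintype_card).symm

set_option maxHeartbeats 1000000 in
theorem gab_aux (p e m : ℕ) [Fact p.Prime] (hq : 1 ≤ e)
    (K : Type*) [Field K] [Fintype K] [CharP K p]
    (hcard : Fintype.card K = (p ^ e) ^ m)
    (N M : ℕ) (hM1 : 1 ≤ M) (hMN : M ≤ N)
    (g : Fin N → K) (hg : LinearIndependent (Fqsub p e K) g)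
    (a : Fin M → K) (ha : a ≠ 0) :
    N - M + 1 ≤ rankFq p e K (fun i => ∑ j, a j * g i ^ (p ^ e) ^ (j : ℕ)) := by
  classical
  haveI : ExpChar K p := ExpChar.prime Fact.out
  haveI : Module.Finite (Fqsub p e K) K := Module.Finite.of_finite
  have hp2 : 2 ≤ p := (Fact.out : p.Prime).two_le
  have h1q : 1 < p ^ e := Nat.one_lt_pow (by omega) hp2
  set F := Fqsub p e K with hF
  set φ : K →ₗ[F] K := linMap p e a with hφ
  set W := Submodule.span F (Set.range g) with hW
  have hrank : rankFq p e K (fun i => ∑ j, a j * g i ^ (p ^ e) ^ (j : ℕ))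
      = Module.finrank F (W.map φ) := by
    have hfun : (fun i => ∑ j, a j * g i ^ (p ^ e) ^ (j : ℕ)) = ⇑φ ∘ g := rfl
    unfold rankFq
    rw [hfun, Set.range_comp, Submodule.span_image]
  rw [hrank]
  set ψ : W →ₗ[F] K := φ.comp W.subtype with hψ
  have hrange : LinearMap.range ψ = W.map φ := by
    rw [hψ, LinearMap.range_comp, Submodule.range_subtype]
  have hWrank : Module.finrank F W = N := by
    rw [hW, finrank_span_eq_card hg, Fintype.card_fin]
  have hsum := LinearMap.finrank_range_add_finrank_ker ψ
  rw [hrange, hWrank] at hsum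
  -- bound the kernel of ψ by the kernel of φ
  have hle : Module.finrank F (LinearMap.ker ψ) ≤ Module.finrank F (LinearMap.ker φ) := by
    have hmap : (LinearMap.ker ψ).map W.subtype ≤ LinearMap.ker φ := by
      rintro x hx
      rcases Submodule.mem_map.mp hx with ⟨y, hy, rfl⟩
      exact LinearMap.mem_ker.mpr (LinearMap.mem_ker.mp hy)
    calc Module.finrank F (LinearMap.ker ψ)
        = Module.finrank F ((LinearMap.ker ψ).map W.subtype) :=
          (Submodule.equivMapOfInjective _ (Submodule.injective_subtype W) _).finrank_eq
      _ ≤ _ := Submodule.finrank_mono hmap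
  -- bound the kernel of φ via a polynomial root count
  have hkerφ : Module.finrank F (LinearMap.ker φ) ≤ M - 1 := by
    set P : K[X] := ∑ j : Fin M, C (a j) * X ^ (p ^ e) ^ (j : ℕ) with hP
    have hPne : P ≠ 0 := by
      obtain ⟨j0, hj0⟩ := Function.ne_iff.mp ha
      intro h0
      have hcoeff : P.coeff ((p ^ e) ^ (j0 : ℕ)) = a j0 := by
        rw [hP, Polynomial.finset_sum_coeff]
        rw [Finset.sum_eq_single j0]
        · simp [Polynomial.coeff_C_mul, Polynomial.coeff_X_pow]
        · intro j _ hjne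
          simp only [Polynomial.coeff_C_mul, Polynomial.coeff_X_pow]
          rw [if_neg, mul_zero]
          intro heq
          exact hjne (Fin.ext (Nat.pow_right_injective h1q heq.symm))
        · intro h; exact absurd (Finset.mem_univ j0) h
      rw [h0, Polynomial.coeff_zero] at hcoeff
      exact hj0 hcoeff.symm
    have hPdeg : P.natDegree ≤ (p ^ e) ^ (M - 1) := by
      apply Polynomial.natDegree_sum_le_of_forall_le
      intro j _
      refine (Polynomial.natDegree_C_mul_le _ _).trans ?_
      rw [Polynomial.natDegree_X_pow]
      exact Nat.pow_le_pow_right (by omega) (by omega)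
    have hroots : ∀ x : K, x ∈ LinearMap.ker φ → x ∈ P.roots := by
      intro x hx
      rw [Polynomial.mem_roots hPne]
      rw [Polynomial.IsRoot, hP]
      simp only [Polynomial.eval_finset_sum, Polynomial.eval_mul, Polynomial.eval_C,
        Polynomial.eval_pow, Polynomial.eval_X]
      exact LinearMap.mem_ker.mp hx
    set T : Finset K := Set.toFinset ((LinearMap.ker φ : Submodule F K) : Set K) with hT
    have hTsub : T.val ⊆ P.roots := by
      intro x hx
      exact hroots x (by simpa [hT, Set.mem_toFinset] using hx)
    have hTcard : T.card ≤ (p ^ e) ^ (M - 1) :=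
      (Polynomial.card_le_degree_of_subset_roots hTsub).trans hPdeg
    have hcardker : Nat.card (LinearMap.ker φ) = T.card := by
      rw [hT, ← Set.ncard_eq_toFinset_card', ← Nat.card_coe_set_eq]
      rfl
    have hpow : Nat.card F ^ Module.finrank F (LinearMap.ker φ) ≤ (p ^ e) ^ (M - 1) := by
      rw [← natCard_eq_pow_finrank F (LinearMap.ker φ), hcardker]
      exact hTcard
    have hFcard : p ^ e ≤ Nat.card F := card_Fqsub_ge p e m hq K hcard
    have h2 : (p ^ e) ^ Module.finrank F (LinearMap.ker φ) ≤ (p ^ e) ^ (M - 1) :=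
      (Nat.pow_le_pow_left hFcard _).trans hpow
    exact (Nat.pow_le_pow_iff_right h1q).mp h2
  omega

/-- For `g_1, …, g_N ∈ K` (a finite field with `q^m` elements, `m ≥ N`)
linearly independent over `F_q` and `1 ≤ M ≤ N`, every nonzero linearized polynomial `f`
of `q`-degree at most `M - 1` satisfies `rank_{F_q}(f(g_1), …, f(g_N)) ≥ N - M + 1`;
consequently the Gabidulin code `{(f(g_1), …, f(g_N))}` has minimum rank distance
at least `N - M + 1`. -/
theorem gabidulin_rank_bound_and_min_rank_distance
    (p e m : ℕ) [Fact p.Prime] (hq : 1 ≤ e)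
    (K : Type*) [Field K] [Fintype K] [CharP K p]
    (hcard : Fintype.card K = (p ^ e) ^ m)
    (N M : ℕ) (hM1 : 1 ≤ M) (hMN : M ≤ N) (hNm : N ≤ m)
    (g : Fin N → K) (hg : LinearIndependent (Fqsub p e K) g) :
    (∀ a : Fin M → K, a ≠ 0 →
        N - M + 1 ≤ rankFq p e K (fun i => ∑ j, a j * g i ^ (p ^ e) ^ (j : ℕ))) ∧
    (∀ a a' : Fin M → K, a ≠ a' →
        N - M + 1 ≤ rankFq p e K (fun i =>
          (∑ j, a j * g i ^ (p ^ e) ^ (j : ℕ)) - ∑ j, a' j * g i ^ (p ^ e) ^ (j : ℕ))) := by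
  constructor
  · intro a ha
    exact gab_aux p e m hq K hcard N M hM1 hMN g hg a ha
  · intro a a' hne
    have h := gab_aux p e m hq K hcard N M hM1 hMN g hg (a - a') (sub_ne_zero.mpr hne)
    have hfun : (fun i => (∑ j, a j * g i ^ (p ^ e) ^ (j : ℕ))
          - ∑ j, a' j * g i ^ (p ^ e) ^ (j : ℕ))
        = fun i => ∑ j, (a - a') j * g i ^ (p ^ e) ^ (j : ℕ) := by
      funext i
      rw [← Finset.sum_sub_distrib]
      exact Finset.sum_congr rfl fun j _ => by simp [sub_mul]
    rw [hfun]
    exact h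
end

section
/- (Singleton bound for the rank metric) Let K be a finite field with q^m elements and let C be a K-linear subspace of K^N of dimension M ≥ 1 over K. Then there exists a nonzero codeword c ∈ C with rank_{F_q}(c) ≤ N − M + 1; in particular, the minimum rank distance D of C satisfies D ≤ N − M + 1. -/
theorem singleton_bound_rank_metric_aux
    (K : Type*) [Field K] (F : Subfield K)
    (N M : ℕ) (hM : 1 ≤ M)
    (C : Submodule K (Fin N → K)) (hdim : Module.finrank K C = M) :
    ∃ c ∈ C, c ≠ 0 ∧
      Module.finrank F (Submodule.span F (Set.range c)) ≤ N - M + 1 := by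
  classical
  have hMN : M ≤ N := by
    have h1 : Module.finrank K C ≤ Module.finrank K (Fin N → K) := C.finrank_le
    simpa [hdim, Module.finrank_fin_fun] using h1
  obtain ⟨S, -, hS⟩ := Finset.exists_subset_card_eq
    (s := (Finset.univ : Finset (Fin N))) (by simpa using (Nat.sub_le M 1).trans hMN : M - 1 ≤ Finset.univ.card)
  -- projection to coordinates in S
  let f : C →ₗ[K] (S → K) := (LinearMap.funLeft K K (fun i : S => (i : Fin N))).comp C.subtype
  have hker : (LinearMap.ker f) ≠ ⊥ := by
    intro hbot
    have h3 := LinearMap.finrank_range_add_finrank_ker f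
    rw [hbot, finrank_bot, hdim] at h3
    have hr : Module.finrank K (LinearMap.range f) ≤ M - 1 := by
      have h2 := (LinearMap.range f).finrank_le
      simpa [Module.finrank_pi, hS] using h2
    omega
  obtain ⟨c, hck, hc0⟩ := Submodule.exists_mem_ne_zero_of_ne_bot hker
  have hcS : ∀ i : Fin N, i ∈ S → (c : Fin N → K) i = 0 := by
    intro i hi
    have h4 : f c = 0 := hck
    exact congrFun h4 ⟨i, hi⟩
  refine ⟨(c : C), (c : C).2, ?_, ?_⟩
  · intro h
    exact hc0 (Subtype.ext h)
  · -- range c ⊆ image over Sᶜ plus 0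
    have hsub : Set.range ((c : C) : Fin N → K) ⊆
        insert 0 (((c : C) : Fin N → K) '' (Sᶜ : Finset (Fin N))) := by
      rintro x ⟨i, rfl⟩
      by_cases hi : i ∈ S
      · simp [hcS i hi]
      · exact Set.mem_insert_of_mem _ ⟨i, by simpa using hi, rfl⟩
    have hle : Submodule.span F (Set.range ((c : C) : Fin N → K)) ≤
        Submodule.span F ((Sᶜ : Finset (Fin N)).image ((c : C) : Fin N → K) : Set K) := by
      refine Submodule.span_le.2 (hsub.trans ?_)
      rw [Finset.coe_image]
      refine Set.insert_subset (Submodule.zero_mem _) Submodule.subset_span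
    calc Module.finrank F (Submodule.span F (Set.range ((c : C) : Fin N → K)))
        ≤ Module.finrank F (Submodule.span F
            ((Sᶜ : Finset (Fin N)).image ((c : C) : Fin N → K) : Set K)) := by
          haveI : Module.Finite F (Submodule.span F
              ((Sᶜ : Finset (Fin N)).image ((c : C) : Fin N → K) : Set K)) :=
            FiniteDimensional.span_finset F ((Sᶜ : Finset (Fin N)).image ((c : C) : Fin N → K))
          exact Submodule.finrank_mono hle
      _ ≤ ((Sᶜ : Finset (Fin N)).image ((c : C) : Fin N → K)).card :=
          finrank_span_finset_le_card _
      _ ≤ (Sᶜ : Finset (Fin N)).card := Finset.card_image_le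
      _ = N - M + 1 := by
          rw [Finset.card_compl, hS, Fintype.card_fin]
          omega

/-- Singleton bound for the rank metric. If `C ⊆ K^N` is a `K`-linear
subspace of dimension `M ≥ 1` over `K` (where `K` is a finite field with `q^m` elements),
then there is a nonzero codeword `c ∈ C` with `rank_{F_q}(c) ≤ N - M + 1`; in particular
the minimum rank distance `D` of `C` satisfies `D ≤ N - M + 1`. -/
theorem singleton_bound_rank_metric
    (p e m : ℕ) [Fact p.Prime] (hq : 1 ≤ e)
    (K : Type*) [Field K] [Fintype K] [CharP K p]
    (hcard : Fintype.card K = (p ^ e) ^ m)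
    (N M : ℕ) (hM : 1 ≤ M)
    (C : Submodule K (Fin N → K)) (hdim : Module.finrank K C = M) :
    ∃ c ∈ C, c ≠ 0 ∧ rankFq p e K c ≤ N - M + 1 :=
  singleton_bound_rank_metric_aux K (Fqsub p e K) N M hM C hdim
end

section
/- Let K be a finite field with q^m elements, let g_1, …, g_N ∈ K be linearly independent over F_q, and let 1 ≤ M ≤ N. Then the K-linear evaluation map from K^M to K^N sending (a_0, …, a_{M−1}) to the vector (Σ_{j=0}^{M−1} a_j g_i^{q^j})_{i=1}^{N} is injective; that is, the Gabidulin code of length N with M message symbols has dimension M over K, and the message coefficients are uniquely determined by the codeword. -/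
open Polynomial in
theorem Fqsub_natCard (p e m : ℕ) [Fact p.Prime] (he : e ≠ 0) (hm : m ≠ 0)
    (K : Type*) [Field K] [Fintype K] [CharP K p]
    (hcard : Fintype.card K = (p ^ e) ^ m) :
    Nat.card (Fqsub p e K) = p ^ e := by
  classical
  set q := p ^ e with hqdef
  have hp1 : 1 < p := (Fact.out : p.Prime).one_lt
  set P : K[X] := X ^ q - X with hP
  have hPdeg : P.natDegree = q := FiniteField.X_pow_card_pow_sub_X_natDegree_eq K he hp1
  have hPne : P ≠ 0 := FiniteField.X_pow_card_pow_sub_X_ne_zero K he hp1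
  set B : K[X] := X ^ Fintype.card K - X with hB
  have hBne : B ≠ 0 := by
    rw [hB, hcard, ← pow_mul]
    exact FiniteField.X_pow_card_pow_sub_X_ne_zero K (by positivity) hp1
  have hBdeg : B.natDegree = Fintype.card K := by
    rw [hB, hcard, ← pow_mul]
    simpa [pow_mul] using FiniteField.X_pow_card_pow_sub_X_natDegree_eq K
      (n := e * m) (by positivity) hp1
  have hBsplits : Splits B := by
    rw [splits_iff_card_roots, FiniteField.roots_X_pow_card_sub_X, hBdeg]
    simp [Finset.card_univ]
  have hdvd : P ∣ B := by
    have hq1 : 1 ≤ q := le_of_lt (one_lt_pow₀ hp1 he)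
    obtain ⟨k, hk⟩ : q - 1 ∣ q ^ m - 1 := by
      simpa using Nat.sub_dvd_pow_sub_pow q 1 m
    have h1 : (X : K[X]) ^ (q - 1) - 1 ∣ X ^ (q ^ m - 1) - 1 := by
      rw [hk, pow_mul]
      simpa using sub_dvd_pow_sub_pow ((X : K[X]) ^ (q-1)) 1 k
    obtain ⟨c, hc⟩ := h1
    refine ⟨c, ?_⟩
    have e1 : P = X * ((X : K[X]) ^ (q - 1) - 1) := by
      have hq : q = q - 1 + 1 := by omega
      rw [hP]; conv_lhs => rw [hq]
      rw [pow_succ]; ring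
    have e2 : B = X * ((X : K[X]) ^ (q ^ m - 1) - 1) := by
      have h1 : 1 ≤ q ^ m := Nat.one_le_pow _ _ (by positivity)
      have hq : q ^ m = q ^ m - 1 + 1 := by omega
      rw [hB, hcard]; conv_lhs => rw [hq]
      rw [pow_succ]; ring
    rw [e2, hc, e1]
    ring
  have hPsplits : Splits P := hBsplits.of_dvd hBne hdvd
  have hsep : P.Separable := galois_poly_separable p q (dvd_pow_self p he)
  have hPsplits' : Splits (P.map (algebraMap K K)) := by rwa [Algebra.algebraMap_self, Polynomial.map_id]
  have hcardroot : Fintype.card (P.rootSet K) = q := by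
    rw [card_rootSet_eq_natDegree hsep hPsplits', hPdeg]
  rw [← Nat.card_eq_fintype_card] at hcardroot
  have heq : Nat.card (Fqsub p e K) = Nat.card (P.rootSet K) := by
    apply Nat.card_congr
    apply Equiv.subtypeEquivRight
    intro x
    rw [mem_rootSet, and_iff_right hPne]
    have hmem : x ∈ Fqsub p e K ↔ x ^ p ^ e = x := Iff.rfl
    simp [hmem, hP, sub_eq_zero, hPne, hqdef]
  rw [heq, hcardroot]

/-- For `g_1, …, g_N ∈ K` linearly independent over `F_q` and
`1 ≤ M ≤ N`, the `K`-linear evaluation map `K^M → K^N`,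
`(a_0, …, a_{M-1}) ↦ (∑_{j<M} a_j g_i^{q^j})_i`, is injective: the Gabidulin code of
length `N` with `M` message symbols has dimension `M` over `K`, and the message
coefficients are uniquely determined by the codeword. -/
theorem gabidulin_encoding_injective
    (p e m : ℕ) [Fact p.Prime] (hq : 1 ≤ e)
    (K : Type*) [Field K] [Fintype K] [CharP K p]
    (hcard : Fintype.card K = (p ^ e) ^ m)
    (N M : ℕ) (hM : 1 ≤ M) (hMN : M ≤ N)
    (g : Fin N → K) (hg : LinearIndependent (Fqsub p e K) g) :
    Function.Injective
      (fun a : Fin M → K => fun i : Fin N => ∑ j, a j * g i ^ (p ^ e) ^ (j : ℕ)) := by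
  classical
  set q := p ^ e with hqdef
  have hp1 : 1 < p := (Fact.out : p.Prime).one_lt
  have he : e ≠ 0 := by omega
  have hq2 : 2 ≤ q := one_lt_pow₀ hp1 he
  have hm : m ≠ 0 := by
    intro h
    rw [h, pow_zero] at hcard
    have := Fintype.one_lt_card (α := K)
    omega
  set F := Fqsub p e K with hF
  haveI : ExpChar K p := ExpChar.prime Fact.out
  -- reduce to triviality of the kernel
  suffices H : ∀ c : Fin M → K, (∀ i : Fin N, ∑ j, c j * g i ^ q ^ (j : ℕ) = 0) → c = 0 by
    intro a b hab
    have h0 : ∀ i : Fin N, ∑ j, (a j - b j) * g i ^ q ^ (j : ℕ) = 0 := by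
      intro i
      have h1 := congrFun hab i
      simp only at h1
      simp [sub_mul, Finset.sum_sub_distrib, h1]
    have hc := H _ h0
    funext j
    have := congrFun hc j
    simpa [sub_eq_zero] using this
  intro c hc
  by_contra hne
  obtain ⟨j0, hj0⟩ : ∃ j, c j ≠ 0 := by
    by_contra h
    push_neg at h
    exact hne (funext h)
  -- the linearized polynomial
  set P : Polynomial K := ∑ j : Fin M, Polynomial.C (c j) * Polynomial.X ^ (q ^ (j : ℕ)) with hPdef
  have hqinj : Function.Injective (fun j : ℕ => q ^ j) := fun a b hab =>
    Nat.pow_right_injective hq2 hab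
  have hPcoeff : P.coeff (q ^ (j0 : ℕ)) = c j0 := by
    rw [hPdef, Polynomial.finset_sum_coeff]
    rw [Finset.sum_eq_single j0]
    · simp [Polynomial.coeff_C_mul, Polynomial.coeff_X_pow]
    · intro j _ hjne
      rw [Polynomial.coeff_C_mul, Polynomial.coeff_X_pow, if_neg, mul_zero]
      intro hqe
      exact hjne (Fin.ext (hqinj hqe.symm))
    · intro h
      exact absurd (Finset.mem_univ j0) h
  have hPne : P ≠ 0 := by
    intro h
    rw [h, Polynomial.coeff_zero] at hPcoeff
    exact hj0 hPcoeff.symm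
  have hPdeg : P.natDegree ≤ q ^ (M - 1) := by
    apply Polynomial.natDegree_sum_le_of_forall_le
    intro j _
    refine le_trans (Polynomial.natDegree_C_mul_le _ _) ?_
    rw [Polynomial.natDegree_X_pow]
    exact Nat.pow_le_pow_right (by omega) (by omega)
  -- every element of the F_q-span of the g i is a root of P
  have hfix : ∀ (d : F) (j : ℕ), (d : K) ^ q ^ j = (d : K) := by
    intro d j
    induction j with
    | zero => simp
    | succ n ih =>
      rw [pow_succ, pow_mul, ih]
      exact d.2
  have hadd : ∀ (x y : K) (j : ℕ), (x + y) ^ q ^ (j : ℕ) = x ^ q ^ j + y ^ q ^ j := by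
    intro x y j
    rw [hqdef, ← pow_mul]
    exact add_pow_expChar_pow x y p (e * j)
  let f : K →ₗ[F] K :=
    { toFun := fun x => ∑ j : Fin M, c j * x ^ q ^ (j : ℕ)
      map_add' := by
        intro x y
        rw [← Finset.sum_add_distrib]
        refine Finset.sum_congr rfl fun j _ => ?_
        rw [hadd, mul_add]
      map_smul' := by
        intro d x
        show ∑ j : Fin M, c j * (d • x) ^ q ^ (j : ℕ) = d • ∑ j : Fin M, c j * x ^ q ^ (j : ℕ)
        have hsmul : ∀ y : K, d • y = (d : K) * y := fun _ => rfl
        rw [hsmul, hsmul, Finset.mul_sum]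
        refine Finset.sum_congr rfl fun j _ => ?_
        rw [mul_pow, hfix]
        ring }
  have hspan : Submodule.span F (Set.range g) ≤ LinearMap.ker f := by
    rw [Submodule.span_le]
    rintro x ⟨i, rfl⟩
    exact hc i
  have hroots : ∀ x ∈ Submodule.span F (Set.range g), P.IsRoot x := by
    intro x hx
    have hfx : f x = 0 := hspan hx
    have : P.eval x = f x := by
      rw [hPdef, Polynomial.eval_finset_sum]
      simp [f]
    rw [Polynomial.IsRoot, this, hfx]
  -- counting
  set S := Submodule.span F (Set.range g) with hS
  haveI : Fintype F := Fintype.ofFinite F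
  haveI : Fintype S := Fintype.ofFinite S
  have hFcard : Fintype.card F = q := by
    rw [← Nat.card_eq_fintype_card]
    exact Fqsub_natCard p e m he hm K hcard
  have hrank : Module.finrank F S = N := by
    rw [hS]
    simpa using finrank_span_eq_card hg
  have hScard : Fintype.card S = q ^ N := by
    rw [Module.card_eq_pow_finrank (K := F) (V := S), hFcard, hrank]
  -- S injects into the root set of P
  haveI : Fintype (S : Set K) := Fintype.ofFinite _
  set T : Finset K := (S : Set K).toFinset with hT
  have hTcard : T.card = q ^ N := by
    rw [hT, Set.toFinset_card, ← hScard]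
    congr 1
    exact Subsingleton.elim _ _
  have hsub : T ⊆ P.roots.toFinset := by
    intro x hx
    rw [hT, Set.mem_toFinset] at hx
    rw [Multiset.mem_toFinset, Polynomial.mem_roots hPne]
    exact hroots x hx
  have hle : (q : ℕ) ^ N ≤ q ^ (M - 1) := by
    calc q ^ N = T.card := hTcard.symm
      _ ≤ P.roots.toFinset.card := Finset.card_le_card hsub
      _ ≤ Multiset.card P.roots := Multiset.toFinset_card_le _
      _ ≤ P.natDegree := Polynomial.card_roots' P
      _ ≤ q ^ (M - 1) := hPdeg
  have hlt : q ^ (M - 1) < q ^ N := Nat.pow_lt_pow_right hq2 (by omega)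
  omega
end

section
/- (Decoding content of Theorem 3) Let N, M', t', s be nonnegative integers with 2t' + s ≤ N − M', let K be a finite field with q^m elements, m ≥ N, and let g_1, …, g_N ∈ K be linearly independent over F_q. Let T ⊆ {1, …, N} with |T| = N − s. For j = 1, 2 let f_j(x) = Σ_{i=0}^{M'−1} a_i^{(j)} x^{q^i} be a linearized polynomial of q-degree at most M' − 1 and let e_j ∈ K^N satisfy rank_{F_q}(e_j) ≤ t'. If f_1(g_i) + (e_1)_i = f_2(g_i) + (e_2)_i for all i ∈ T, then a_i^{(1)} = a_i^{(2)} for all 0 ≤ i ≤ M' − 1. (Applied with t' = tα and s = N − ⌊(n − d_min + 1)/(r + δ − 1)⌋·rα − min{hα, rα}, this shows that in Construction II, if the outer Gabidulin code has minimum rank distance D ≥ 2tα + (n/(r+δ−1) − ⌊(n − d_min + 1)/(r + δ − 1)⌋)rα − min{hα, rα} + 1, then the original data can be recovered from any n − d_min + 1 nodes in the presence of t statically corrupted nodes.) -/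
section Auxiliary

variable (p e : ℕ) (K : Type*) [Field K] [Fact p.Prime] [CharP K p]

/-- Elements of `F_q` are fixed by all iterates of the `q`-power Frobenius. -/
lemma Fqsub.pow_fixed (c : Fqsub p e K) (n : ℕ) : (c : K) ^ (p ^ e) ^ n = c := by
  induction n with
  | zero => simp
  | succ n ih =>
    have hc : (c : K) ^ p ^ e = c := c.2
    rw [pow_succ, pow_mul, ih, hc]

/-- A linearized polynomial, as an `F_q`-linear map on `K`. -/
noncomputable def linMapFq (M' : ℕ) (a : Fin M' → K) : K →ₗ[Fqsub p e K] K where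
  toFun x := ∑ j, a j * x ^ (p ^ e) ^ (j : ℕ)
  map_add' x y := by
    haveI : ExpChar K p := ExpChar.prime Fact.out
    rw [← Finset.sum_add_distrib]
    refine Finset.sum_congr rfl fun j _ => ?_
    rw [← mul_add]
    congr 1
    rw [← pow_mul, add_pow_expChar_pow]
  map_smul' c x := by
    simp only [RingHom.id_apply]
    have hsm : ∀ y : K, c • y = (c : K) * y := fun y => rfl
    conv_rhs => rw [hsm]
    rw [Finset.mul_sum]
    refine Finset.sum_congr rfl fun j _ => ?_
    rw [hsm, mul_pow, Fqsub.pow_fixed, mul_left_comm]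

/-- `F_q` has at least `q = p ^ e` elements when `K` has `q ^ m` elements, `m ≥ 1`. -/
lemma Fqsub.card_ge (m : ℕ) [Fintype K] (hq : 1 ≤ e) (hm : 1 ≤ m)
    (hcard : Fintype.card K = (p ^ e) ^ m) : p ^ e ≤ Nat.card (Fqsub p e K) := by
  classical
  set q := p ^ e with hqdef
  have hq1 : 1 < q := Nat.one_lt_pow (by omega) (Fact.out : p.Prime).one_lt
  obtain ⟨ζ, hζ⟩ := IsCyclic.exists_generator (α := Kˣ)
  have horder : orderOf (ζ : K) = q ^ m - 1 := by
    rw [orderOf_units, orderOf_eq_card_of_forall_mem_zpowers hζ, Nat.card_units,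
      Nat.card_eq_fintype_card, hcard]
  have hprim : IsPrimitiveRoot (ζ : K) (q ^ m - 1) := horder ▸ IsPrimitiveRoot.orderOf (ζ : K)
  have hdvd : q - 1 ∣ q ^ m - 1 := by
    simpa using Nat.sub_dvd_pow_sub_pow q 1 m
  have hpos : 0 < q ^ m - 1 := by
    have : 1 < q ^ m := Nat.one_lt_pow (by omega) hq1
    omega
  have hξ : IsPrimitiveRoot ((ζ : K) ^ ((q ^ m - 1) / (q - 1))) (q - 1) :=
    hprim.pow hpos (Nat.div_mul_cancel hdvd).symm
  set S : Finset K := insert (0 : K) (Polynomial.nthRootsFinset (q - 1) (1 : K)) with hS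
  have h0 : (0 : K) ∉ Polynomial.nthRootsFinset (q - 1) (1 : K) := by
    intro h
    have := (Polynomial.mem_nthRootsFinset (by omega) (1 : K)).1 h
    rw [zero_pow (by omega)] at this
    exact zero_ne_one this
  have hcardS : S.card = q := by
    rw [hS, Finset.card_insert_of_notMem h0, hξ.card_nthRootsFinset]
    omega
  have hmem : ∀ x ∈ S, x ∈ Fqsub p e K := by
    intro x hx
    rcases Finset.mem_insert.1 hx with h | h
    · subst h; exact (Fqsub p e K).zero_mem
    · have hx1 : x ^ (q - 1) = 1 := (Polynomial.mem_nthRootsFinset (by omega) (1 : K)).1 h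
      show x ^ q = x
      have hq' : q = (q - 1) + 1 := by omega
      rw [hq', pow_succ, hx1, one_mul]
  calc q = S.card := hcardS.symm
  _ = Nat.card {x : K // x ∈ S} := by rw [Nat.card_eq_fintype_card, Fintype.card_coe]
  _ ≤ Nat.card (Fqsub p e K) :=
      Nat.card_le_card_of_injective (fun x => ⟨x.1, hmem x.1 x.2⟩)
        (fun x y hxy => Subtype.ext (by simpa using congrArg Subtype.val hxy))

end Auxiliary

set_option maxHeartbeats 1000000
set_option synthInstance.maxHeartbeats 400000
/-- Decoding content of Theorem 3. Let `2t' + s ≤ N - M'`, let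
`g_1, …, g_N ∈ K` (`m ≥ N`) be linearly independent over `F_q`, and let
`T ⊆ {1, …, N}` with `|T| = N - s`. If two linearized polynomials of `q`-degree at most
`M' - 1`, corrupted by errors of rank at most `t'`, agree on all coordinates in `T`,
then their coefficient vectors coincide. -/
theorem construction_II_decoding
    (p e m : ℕ) [Fact p.Prime] (hq : 1 ≤ e)
    (K : Type*) [Field K] [Fintype K] [CharP K p]
    (hcard : Fintype.card K = (p ^ e) ^ m)
    (N M' t' s : ℕ) (hts : 2 * t' + s + M' ≤ N) (hNm : N ≤ m)
    (g : Fin N → K) (hg : LinearIndependent (Fqsub p e K) g)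
    (T : Finset (Fin N)) (hT : T.card = N - s)
    (a₁ a₂ : Fin M' → K)
    (w₁ w₂ : Fin N → K) (hw₁ : rankFq p e K w₁ ≤ t') (hw₂ : rankFq p e K w₂ ≤ t')
    (heq : ∀ i ∈ T,
        (∑ j, a₁ j * g i ^ (p ^ e) ^ (j : ℕ)) + w₁ i =
        (∑ j, a₂ j * g i ^ (p ^ e) ^ (j : ℕ)) + w₂ i) :
    a₁ = a₂ := by
  classical
  have hq1 : 1 < p ^ e := Nat.one_lt_pow (by omega) (Fact.out : p.Prime).one_lt
  by_contra hne
  -- the difference of the two coefficient vectors is nonzero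
  set a : Fin M' → K := fun j => a₁ j - a₂ j with ha_def
  obtain ⟨j0, hj0⟩ : ∃ j, a j ≠ 0 := by
    by_contra h
    push_neg at h
    exact hne (funext fun j => sub_eq_zero.1 (h j))
  have hM' : 0 < M' := j0.pos
  set w : Fin N → K := fun i => w₂ i - w₁ i with hw_def
  set L := linMapFq p e K M' a with hL
  have key : ∀ i ∈ T, L (g i) = w i := by
    intro i hi
    have h := heq i hi
    show (∑ j, a j * g i ^ (p ^ e) ^ (j : ℕ)) = w₂ i - w₁ i
    have : ∀ j : Fin M', a j * g i ^ (p ^ e) ^ (j : ℕ) =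
        a₁ j * g i ^ (p ^ e) ^ (j : ℕ) - a₂ j * g i ^ (p ^ e) ^ (j : ℕ) := by
      intro j; rw [ha_def]; ring
    rw [Finset.sum_congr rfl fun j _ => this j, Finset.sum_sub_distrib]
    linear_combination h
  -- the error space
  set W := Submodule.span (Fqsub p e K) (Set.range w₁) ⊔ Submodule.span (Fqsub p e K) (Set.range w₂) with hW
  have hWrank : Module.finrank (Fqsub p e K) W ≤ 2 * t' := by
    refine le_trans (Submodule.finrank_add_le_finrank_add_finrank _ _) ?_
    unfold rankFq at hw₁ hw₂
    omega
  have hwW : ∀ i, w i ∈ W := fun i =>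
    sub_mem
      (le_sup_right (α := Submodule (Fqsub p e K) K) (Submodule.subset_span ⟨i, rfl⟩))
      (le_sup_left (α := Submodule (Fqsub p e K) K) (Submodule.subset_span ⟨i, rfl⟩))
  -- the evaluation-point space
  set V := Submodule.span (Fqsub p e K) (Set.range fun i : T => g (i : Fin N)) with hV
  have hgT : LinearIndependent (Fqsub p e K) (fun i : T => g (i : Fin N)) :=
    hg.comp _ Subtype.val_injective
  have hVrank : Module.finrank (Fqsub p e K) V = N - s := by
    rw [hV, finrank_span_eq_card hgT, Fintype.card_coe, hT]
  have hLV : ∀ v ∈ V, L v ∈ W := by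
    intro v hv
    induction hv using Submodule.span_induction with
    | mem x h =>
      obtain ⟨i, rfl⟩ := h
      rw [key i i.2]
      exact hwW i
    | zero => rw [map_zero]; exact W.zero_mem
    | add x y _ _ hx hy => rw [map_add]; exact W.add_mem hx hy
    | smul c x _ hx => rw [map_smul]; exact W.smul_mem c hx
  set L' := L.domRestrict V with hL'
  have hrange : LinearMap.range L' ≤ W := by
    rintro - ⟨v, rfl⟩
    exact hLV v v.2
  have hrank := LinearMap.finrank_range_add_finrank_ker L'
  have h1 : Module.finrank (Fqsub p e K) (LinearMap.range L') ≤ 2 * t' :=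
    le_trans (Submodule.finrank_mono hrange) hWrank
  have hker : M' ≤ Module.finrank (Fqsub p e K) (LinearMap.ker L') := by
    rw [hVrank] at hrank
    omega
  -- the linearized polynomial as an actual polynomial
  set P : Polynomial K := ∑ j, Polynomial.C (a j) * Polynomial.X ^ ((p ^ e) ^ (j : ℕ)) with hP
  have hPdeg : P.natDegree ≤ (p ^ e) ^ (M' - 1) := by
    refine Polynomial.natDegree_sum_le_of_forall_le _ _ fun j _ => ?_
    refine le_trans (Polynomial.natDegree_C_mul_le _ _) ?_
    rw [Polynomial.natDegree_X_pow]
    exact Nat.pow_le_pow_right (by omega) (by omega)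
  have hPcoeff : P.coeff ((p ^ e) ^ (j0 : ℕ)) = a j0 := by
    rw [hP, Polynomial.finset_sum_coeff]
    rw [Finset.sum_eq_single j0]
    · simp [Polynomial.coeff_C_mul, Polynomial.coeff_X_pow]
    · intro j _ hjne
      simp only [Polynomial.coeff_C_mul, Polynomial.coeff_X_pow]
      rw [if_neg, mul_zero]
      intro hpow
      have hj : (j0 : ℕ) = (j : ℕ) := Nat.pow_right_injective hq1 hpow
      exact hjne (Fin.ext hj.symm)
    · intro h
      exact absurd (Finset.mem_univ j0) h
  have hP0 : P ≠ 0 := fun h => hj0 (by rw [← hPcoeff, h, Polynomial.coeff_zero])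
  have hroot : ∀ x : LinearMap.ker L', (((x : V) : K)) ∈ P.roots.toFinset := by
    intro x
    have hx0 : L (((x : V) : K)) = 0 := x.2
    rw [Multiset.mem_toFinset, Polynomial.mem_roots hP0]
    show Polynomial.eval _ P = 0
    rw [hP, Polynomial.eval_finset_sum]
    simp only [Polynomial.eval_mul, Polynomial.eval_C, Polynomial.eval_pow, Polynomial.eval_X]
    exact hx0
  -- counting
  have hcount1 : Nat.card (LinearMap.ker L') ≤ (p ^ e) ^ (M' - 1) := by
    have step : Nat.card (LinearMap.ker L') ≤ Nat.card {x : K // x ∈ P.roots.toFinset} :=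
      Nat.card_le_card_of_injective (fun x => ⟨((x : V) : K), hroot x⟩)
        (fun x y hxy => by
          apply Subtype.ext
          apply Subtype.ext
          simpa using congrArg Subtype.val hxy)
    refine le_trans step ?_
    rw [Nat.card_eq_fintype_card, Fintype.card_coe]
    exact le_trans (le_trans (Multiset.toFinset_card_le _) (Polynomial.card_roots' P)) hPdeg
  have hcount2 : (p ^ e) ^ M' ≤ Nat.card (LinearMap.ker L') := by
    haveI : Fintype (Fqsub p e K) := Fintype.ofFinite (Fqsub p e K)
    haveI : Fintype (LinearMap.ker L') := Fintype.ofFinite _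
    rw [Nat.card_eq_fintype_card, Module.card_eq_pow_finrank (K := (Fqsub p e K))]
    have hcF : p ^ e ≤ Fintype.card (Fqsub p e K) := by
      rw [← Nat.card_eq_fintype_card]
      exact Fqsub.card_ge p e K m hq (by omega) hcard
    calc (p ^ e) ^ M' ≤ (Fintype.card (Fqsub p e K)) ^ M' := Nat.pow_le_pow_left hcF M'
    _ ≤ (Fintype.card (Fqsub p e K)) ^ Module.finrank (Fqsub p e K) (LinearMap.ker L') :=
        Nat.pow_le_pow_right (by omega) hker
  have hlt : (p ^ e) ^ (M' - 1) < (p ^ e) ^ M' :=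
    Nat.pow_lt_pow_right hq1 (by omega)
  omega
end
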